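/- arXiv:1104.5358 — 9 statements merged into one kernel-verified Lean document; each statement's English description precedes it below -/
import Mathlib

section
/- If S is an isometry on a Hilbert space H, M is a closed subspace of H invariant under S* and containing Ker S*, and P_M denotes the orthogonal projection onto M, then S*P_M S is an orthogonal projection, namely the orthogonal projection onto S*M. -/
open ContinuousLinearMap

theorem stmt0 {H : Type*} [NormedAddCommGroup H] [InnerProductSpace ℂ H] [CompleteSpace H]
    (S : H →L[ℂ] H) (hS : ∀ x, ‖S x‖ = ‖x‖)
    (M : Submodule ℂ H) (hMc : IsClosed (M : Set H))
    (hMinv : ∀ x ∈ M, adjoint S x ∈ M)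
    (hker : LinearMap.ker (adjoint S : H →ₗ[ℂ] H) ≤ M)
    (P : H →L[ℂ] H) (hP1 : IsIdempotentElem P) (hP2 : IsSelfAdjoint P)
    (hP3 : LinearMap.range (P : H →ₗ[ℂ] H) = M) :
    IsIdempotentElem ((adjoint S) ∘L P ∘L S) ∧
    IsSelfAdjoint ((adjoint S) ∘L P ∘L S) ∧
    LinearMap.range ((adjoint S) ∘L P ∘L S : H →ₗ[ℂ] H) = Submodule.map (adjoint S : H →ₗ[ℂ] H) M := by
  have hiso : ∀ x y : H, @inner ℂ _ _ (S x) (S y) = @inner ℂ _ _ x y := by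
    intro x y
    exact LinearIsometry.inner_map_map ⟨S.toLinearMap, hS⟩ x y
  have hSadjS : ∀ x : H, adjoint S (S x) = x := by
    intro x
    apply ext_inner_right ℂ
    intro y
    rw [adjoint_inner_left, hiso]
  have hPfix : ∀ m ∈ M, P m = m := by
    intro m hm
    rw [← hP3] at hm
    obtain ⟨y, rfl⟩ := hm
    have := ContinuousLinearMap.ext_iff.mp hP1 y
    simpa using this
  have hPS : ∀ x : H, P (S x) ∈ M := by
    intro x
    rw [← hP3]
    exact ⟨S x, rfl⟩
  have hkey : ∀ m ∈ M, P (S (adjoint S m)) = S (adjoint S m) := by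
    intro m hm
    have h1 : S (adjoint S m) - m ∈ LinearMap.ker (adjoint S : H →ₗ[ℂ] H) := by
      simp [LinearMap.mem_ker, map_sub, hSadjS]
    have h2 := hPfix _ (hker h1)
    calc P (S (adjoint S m)) = P (S (adjoint S m) - m) + P m := by
            rw [← map_add, sub_add_cancel]
      _ = (S (adjoint S m) - m) + m := by rw [h2, hPfix m hm]
      _ = S (adjoint S m) := by rw [sub_add_cancel]
  refine ⟨?_, ?_, ?_⟩
  · ext x
    simp only [ContinuousLinearMap.mul_apply, comp_apply]
    rw [hkey _ (hPS x), hSadjS]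
  · have : adjoint ((adjoint S) ∘L P ∘L S) = (adjoint S) ∘L P ∘L S := by
      rw [adjoint_comp, adjoint_comp, adjoint_adjoint, ← star_eq_adjoint P, hP2.star_eq]
      ext x; simp [comp_apply]
    rw [IsSelfAdjoint, star_eq_adjoint]
    exact this
  · ext y
    constructor
    · rintro ⟨x, rfl⟩
      exact ⟨P (S x), hPS x, rfl⟩
    · rintro ⟨m, hm, rfl⟩
      refine ⟨adjoint S m, ?_⟩
      show adjoint S (P (S (adjoint S m))) = adjoint S m
      rw [hkey m hm, hSadjS]
end

section
/- If S is an isometry on a Hilbert space H, M is a closed S*-invariant subspace containing Ker S*, P_M is the orthogonal projection onto M and R_M is the orthogonal projection onto S*M, then R_M S* = S* P_M. -/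
open ContinuousLinearMap
open scoped ComplexInnerProductSpace

theorem stmt1 {H : Type*} [NormedAddCommGroup H] [InnerProductSpace ℂ H] [CompleteSpace H]
    (S : H →L[ℂ] H) (hS : ∀ x, ‖S x‖ = ‖x‖)
    (M : Submodule ℂ H) (hMc : IsClosed (M : Set H))
    (hMinv : ∀ x ∈ M, adjoint S x ∈ M)
    (hker : LinearMap.ker (adjoint S : H →ₗ[ℂ] H) ≤ M)
    (P : H →L[ℂ] H) (hP1 : IsIdempotentElem P) (hP2 : IsSelfAdjoint P)
    (hP3 : LinearMap.range (P : H →ₗ[ℂ] H) = M)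
    (R : H →L[ℂ] H) (hR1 : IsIdempotentElem R) (hR2 : IsSelfAdjoint R)
    (hR3 : LinearMap.range (R : H →ₗ[ℂ] H) = Submodule.map (adjoint S : H →ₗ[ℂ] H) M) :
    R ∘L (adjoint S) = (adjoint S) ∘L P := by
  have hSiso : ∀ x y : H, ⟪S x, S y⟫ = ⟪x, y⟫ := fun x y =>
    LinearIsometry.inner_map_map ⟨S.toLinearMap, hS⟩ x y
  have hSS : ∀ x : H, adjoint S (S x) = x := by
    intro x
    apply ext_inner_right ℂ
    intro v
    rw [adjoint_inner_left]
    exact hSiso x v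
  -- R fixes elements of its range
  have hRfix : ∀ z, z ∈ LinearMap.range (R : H →ₗ[ℂ] H) → R z = z := by
    rintro z ⟨w, rfl⟩
    have := congrArg (fun T : H →L[ℂ] H => T w) hR1
    simpa using this
  -- R kills vectors orthogonal to its range
  have hRkill : ∀ y : H, (∀ z ∈ LinearMap.range (R : H →ₗ[ℂ] H), ⟪y, z⟫ = 0) → R y = 0 := by
    intro y hy
    have h : ⟪R y, R y⟫ = 0 := by
      have h1 : ⟪y, adjoint R (R y)⟫ = ⟪R y, R y⟫ := adjoint_inner_right R y (R y)
      rw [hR2.adjoint_eq] at h1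
      rw [← h1]
      rw [hRfix (R y) ⟨y, rfl⟩]
      exact hy (R y) ⟨y, rfl⟩
    exact inner_self_eq_zero.mp h
  ext x
  simp only [coe_comp', Function.comp_apply]
  have hPx : P x ∈ M := hP3 ▸ LinearMap.mem_range_self (P : H →ₗ[ℂ] H) x
  have h1 : R (adjoint S (P x)) = adjoint S (P x) := by
    apply hRfix
    rw [hR3]
    exact ⟨P x, hPx, rfl⟩
  -- x - P x is orthogonal to M
  have hperp : ∀ m ∈ M, ⟪x - P x, m⟫ = 0 := by
    intro m hm
    obtain ⟨w, rfl⟩ := hP3 ▸ hm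
    have : ⟪x - P x, P w⟫ = ⟪P (x - P x), w⟫ := by
      rw [← adjoint_inner_left, hP2.adjoint_eq]
    rw [ContinuousLinearMap.coe_coe, this]
    have hPP : P (P x) = P x := by
      have := congrArg (fun T : H →L[ℂ] H => T x) hP1
      simpa using this
    simp [map_sub, hPP]
  -- S*(x - P x) is orthogonal to S*M = range R
  have h2 : R (adjoint S (x - P x)) = 0 := by
    apply hRkill
    intro z hz
    rw [hR3] at hz
    obtain ⟨m, hm, rfl⟩ := hz
    rw [adjoint_inner_left]
    -- ⟪x - P x, S (adjoint S m)⟫ = 0 : write S S* m = m - q with q ∈ ker S* ⊆ M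
    set q := m - S (adjoint S m) with hq
    have hqker : adjoint S q = 0 := by
      rw [hq, map_sub, hSS]
      simp
    have hqM : q ∈ M := hker (LinearMap.mem_ker.mpr hqker)
    have : S (adjoint S m) = m - q := by rw [hq]; abel
    rw [ContinuousLinearMap.coe_coe, this, inner_sub_right, hperp m hm, hperp q hqM]
    ring
  have : adjoint S x = adjoint S (P x) + adjoint S (x - P x) := by
    rw [← map_add]; congr 1; abel
  rw [this, map_add, h1, h2, add_zero]
end

section
/- If S is an isometry on a Hilbert space H, M is a closed S*-invariant subspace containing Ker S*, and R_M is the orthogonal projection onto S*M, then SR_M = P_M S, where P_M is the orthogonal projection onto M. -/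
open ContinuousLinearMap

theorem stmt2 {H : Type*} [NormedAddCommGroup H] [InnerProductSpace ℂ H] [CompleteSpace H]
    (S : H →L[ℂ] H) (hS : ∀ x, ‖S x‖ = ‖x‖)
    (M : Submodule ℂ H) (hMc : IsClosed (M : Set H))
    (hMinv : ∀ x ∈ M, adjoint S x ∈ M)
    (hker : LinearMap.ker (adjoint S : H →ₗ[ℂ] H) ≤ M)
    (P : H →L[ℂ] H) (hP1 : IsIdempotentElem P) (hP2 : IsSelfAdjoint P)
    (hP3 : LinearMap.range (P : H →ₗ[ℂ] H) = M)
    (R : H →L[ℂ] H) (hR1 : IsIdempotentElem R) (hR2 : IsSelfAdjoint R)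
    (hR3 : LinearMap.range (R : H →ₗ[ℂ] H) = Submodule.map (adjoint S : H →ₗ[ℂ] H) M) :
    S ∘L R = P ∘L S := by
  have hPadj : adjoint P = P := hP2
  have hRadj : adjoint R = R := hR2
  -- inner product preservation
  have hinner : ∀ x y : H, (inner ℂ (S x) (S y) : ℂ) = inner ℂ x y := by
    intro x y
    exact (LinearIsometry.inner_map_map ⟨S.toLinearMap, hS⟩ x y)
  -- S* S = 1
  have hSS : ∀ x : H, adjoint S (S x) = x := by
    intro x
    apply ext_inner_right ℂ
    intro y
    rw [adjoint_inner_left]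
    exact hinner x y
  have hPP : ∀ w, P (P w) = P w := fun w => by conv_lhs => rw [← ContinuousLinearMap.mul_apply, hP1]
  have hRR : ∀ w, R (R w) = R w := fun w => by conv_lhs => rw [← ContinuousLinearMap.mul_apply, hR1]
  -- P fixes M
  have hPfix : ∀ u ∈ M, P u = u := by
    intro u hu
    rw [← hP3] at hu
    obtain ⟨w, rfl⟩ := hu
    exact hPP w
  -- P kills vectors orthogonal to M
  have hPkill : ∀ z : H, (∀ m ∈ M, (inner ℂ z m : ℂ) = 0) → P z = 0 := by
    intro z hz
    have h : (inner ℂ (P z) (P z) : ℂ) = 0 := by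
      rw [← adjoint_inner_right, hPadj]
      exact hz (P (P z)) (hP3 ▸ ⟨P z, rfl⟩)
    simpa using inner_self_eq_zero.mp h
  ext x
  simp only [comp_apply, coe_comp', Function.comp_apply]
  -- S (R x) ∈ M
  have hSRx : S (R x) ∈ M := by
    have : R x ∈ Submodule.map (adjoint S : H →ₗ[ℂ] H) M := hR3 ▸ ⟨x, rfl⟩
    obtain ⟨m, hm, heq⟩ := this
    rw [← heq]
    have hk : m - S (adjoint S m) ∈ M := by
      apply hker
      simp [LinearMap.mem_ker, map_sub, hSS]
    have := M.sub_mem hm hk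
    simpa using this
  -- x - R x is orthogonal to S* M
  have hperp : ∀ m ∈ M, (inner ℂ (S (x - R x)) m : ℂ) = 0 := by
    intro m hm
    rw [← adjoint_inner_right]
    have h1 : (inner ℂ (x - R x) (R (adjoint S m)) : ℂ) = inner ℂ (x - R x) (adjoint S m) := by
      congr 1
      have : adjoint S m ∈ LinearMap.range (R : H →ₗ[ℂ] H) := hR3 ▸ ⟨m, hm, rfl⟩
      obtain ⟨w, hw⟩ := this
      rw [← hw]
      exact hRR w
    rw [← h1, ← hRadj, adjoint_inner_right, hRadj]
    have h2 : R (x - R x) = 0 := by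
      rw [map_sub, hRR]
      simp
    rw [h2, inner_zero_left]
  have hsplit : S x = S (R x) + S (x - R x) := by
    rw [← map_add]
    congr 1
    abel
  rw [hsplit, map_add, hPfix _ hSRx, hPkill _ hperp, add_zero]
end

section
/- Let T : H → K be a bounded operator with finite rank, S an isometry on H, and γ = ‖T‖. If no maximizing vector of T belongs to the range of S, then the operator γ²I − S*T*TS is invertible (positive definite). -/
open ContinuousLinearMap

private lemma norm_attain {H K : Type*} [NormedAddCommGroup H] [InnerProductSpace ℂ H]
    [CompleteSpace H] [NormedAddCommGroup K] [InnerProductSpace ℂ K] [CompleteSpace K]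
    (B : H →L[ℂ] K) (hfr : FiniteDimensional ℂ (LinearMap.range (B : H →ₗ[ℂ] K)))
    (hB : B ≠ 0) :
    ∃ w : H, w ≠ 0 ∧ ‖B w‖ = ‖B‖ * ‖w‖ := by
  classical
  set C : H →L[ℂ] H := (adjoint B) ∘L B with hC
  set E : Submodule ℂ H := LinearMap.range (C : H →ₗ[ℂ] H) with hE
  have hEle : E ≤ (LinearMap.range (B : H →ₗ[ℂ] K)).map ((adjoint B) : K →ₗ[ℂ] H) := by
    rintro _ ⟨x, rfl⟩
    exact ⟨B x, ⟨x, rfl⟩, rfl⟩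
  have hEfd : FiniteDimensional ℂ E := by
    have : FiniteDimensional ℂ ((LinearMap.range (B : H →ₗ[ℂ] K)).map ((adjoint B) : K →ₗ[ℂ] H)) :=
      inferInstance
    exact Submodule.finiteDimensional_of_le hEle
  -- B vanishes on Eᗮ
  have hker : ∀ y ∈ Eᗮ, B y = 0 := by
    intro y hy
    have h1 : (inner ℂ (C y) y : ℂ) = 0 :=
      (Submodule.mem_orthogonal E y).mp hy (C y) ⟨y, rfl⟩
    have h2 : (inner ℂ (B y) (B y) : ℂ) = 0 := by
      have h3 : (inner ℂ y (C y) : ℂ) = inner ℂ (B y) (B y) := by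
        simp [hC, comp_apply, adjoint_inner_right]
      rw [← h3, ← inner_conj_symm, h1, map_zero]
    exact inner_self_eq_zero.mp h2
  have hP : ∀ x : H, B x = B ((E.orthogonalProjectionOnto x : E) : H) := by
    intro x
    have h0 := hker _ (Submodule.sub_starProjection_mem_orthogonal (K := E) x)
    rw [map_sub, sub_eq_zero] at h0
    exact h0
  -- E is nontrivial
  have hEne : ∃ v : E, v ≠ 0 := by
    by_contra hcon
    push_neg at hcon
    apply hB
    ext x
    apply hker
    rw [Submodule.mem_orthogonal]
    intro u hu
    have : (⟨u, hu⟩ : E) = 0 := hcon ⟨u, hu⟩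
    have : u = 0 := by simpa using congrArg Subtype.val this
    simp [this]
  obtain ⟨v₀, hv₀⟩ := hEne
  -- maximize on the unit sphere of E
  have hsph : (Metric.sphere (0 : E) 1).Nonempty := by
    refine ⟨(‖v₀‖)⁻¹ • v₀, ?_⟩
    rw [mem_sphere_zero_iff_norm, norm_smul, norm_inv, norm_norm,
      inv_mul_cancel₀ (norm_ne_zero_iff.mpr hv₀)]
  obtain ⟨w, hwsph, hwmax⟩ := (isCompact_sphere (0 : E) 1).exists_isMaxOn hsph
    (f := fun v : E => ‖B (v : H)‖)
    (Continuous.continuousOn (by fun_prop))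
  have hw1 : ‖(w : H)‖ = 1 := by
    rw [Submodule.norm_coe]
    exact mem_sphere_zero_iff_norm.mp hwsph
  refine ⟨(w : H), by simp [← norm_pos_iff, hw1], ?_⟩
  have hub : ∀ u : E, ‖B (u : H)‖ ≤ ‖B (w : H)‖ * ‖(u : H)‖ := by
    intro u
    rcases eq_or_ne u 0 with h | h
    · simp [h]
    · have hmem : (‖u‖)⁻¹ • u ∈ Metric.sphere (0 : E) 1 := by
        rw [mem_sphere_zero_iff_norm, norm_smul, norm_inv, norm_norm,
          inv_mul_cancel₀ (norm_ne_zero_iff.mpr h)]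
      have h4 := hwmax hmem
      simp only [Set.mem_setOf_eq, Submodule.coe_smul_of_tower, SetLike.val_smul, map_smul,
        ContinuousLinearMap.map_smul_of_tower,
        norm_smul, norm_inv, norm_norm, Real.norm_eq_abs, abs_norm] at h4
      have hupos : (0:ℝ) < ‖u‖ := norm_pos_iff.mpr h
      have h5 : ‖B (u : H)‖ ≤ ‖u‖ * ‖B (w : H)‖ := by
        rw [← inv_mul_le_iff₀ hupos]
        exact h4
      rw [Submodule.norm_coe]
      linarith
  have hle : ‖B‖ ≤ ‖B (w : H)‖ := by
    apply opNorm_le_bound B (norm_nonneg _)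
    intro x
    calc ‖B x‖ = ‖B ((E.orthogonalProjectionOnto x : E) : H)‖ := by rw [← hP]
      _ ≤ ‖B (w : H)‖ * ‖((E.orthogonalProjectionOnto x : E) : H)‖ := hub _
      _ ≤ ‖B (w : H)‖ * ‖x‖ := by
          apply mul_le_mul_of_nonneg_left _ (norm_nonneg _)
          calc ‖((E.orthogonalProjectionOnto x : E) : H)‖ = ‖E.orthogonalProjectionOnto x‖ :=
                Submodule.norm_coe _
            _ ≤ ‖E.orthogonalProjectionOnto‖ * ‖x‖ := E.orthogonalProjectionOnto.le_opNorm x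
            _ ≤ 1 * ‖x‖ :=
                mul_le_mul_of_nonneg_right (Submodule.orthogonalProjectionOnto_norm_le E) (norm_nonneg x)
            _ = ‖x‖ := one_mul _
  have hge : ‖B (w : H)‖ ≤ ‖B‖ := by
    calc ‖B (w : H)‖ ≤ ‖B‖ * ‖(w : H)‖ := B.le_opNorm _
      _ = ‖B‖ := by rw [hw1, mul_one]
  rw [hw1, mul_one]
  exact le_antisymm hge hle

theorem stmt5 {H K : Type*} [NormedAddCommGroup H] [InnerProductSpace ℂ H] [CompleteSpace H]
    [NormedAddCommGroup K] [InnerProductSpace ℂ K] [CompleteSpace K]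
    (T : H →L[ℂ] K) (hT0 : T ≠ 0)
    (hfr : FiniteDimensional ℂ (LinearMap.range (T : H →ₗ[ℂ] K)))
    (S : H →L[ℂ] H) (hS : ∀ x, ‖S x‖ = ‖x‖)
    (hmax : ∀ w : H, w ≠ 0 → ‖T w‖ = ‖T‖ * ‖w‖ → w ∉ Set.range S) :
    (∀ x : H, x ≠ 0 →
      0 < (inner ℂ ((((‖T‖ : ℂ) ^ 2) • (1 : H →L[ℂ] H)
        - (adjoint S) ∘L ((adjoint T) ∘L T) ∘L S) x) x : ℂ).re) ∧
    IsUnit (((‖T‖ : ℂ) ^ 2) • (1 : H →L[ℂ] H)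
        - (adjoint S) ∘L ((adjoint T) ∘L T) ∘L S) := by
  set γ : ℝ := ‖T‖ with hγdef
  have hγ : 0 < γ := norm_pos_iff.mpr hT0
  set B : H →L[ℂ] K := T ∘L S with hBdef
  have hkey : (adjoint S) ∘L ((adjoint T) ∘L T) ∘L S = (adjoint B) ∘L B := by
    rw [hBdef, adjoint_comp]
    ext x
    simp [comp_apply]
  -- strict inequality pointwise
  have hBlt : ∀ x : H, x ≠ 0 → ‖B x‖ < γ * ‖x‖ := by
    intro x hx
    have hle : ‖B x‖ ≤ γ * ‖x‖ := by
      rw [hBdef]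
      calc ‖T (S x)‖ ≤ ‖T‖ * ‖S x‖ := T.le_opNorm _
        _ = γ * ‖x‖ := by rw [hS x, hγdef]
    rcases lt_or_eq_of_le hle with h | h
    · exact h
    · exfalso
      have hSx0 : S x ≠ 0 := by
        rw [← norm_ne_zero_iff, hS x, norm_ne_zero_iff]
        exact hx
      have : ‖T (S x)‖ = ‖T‖ * ‖S x‖ := by
        rw [hS x]
        exact h
      exact hmax (S x) hSx0 this ⟨x, rfl⟩
  -- finite rank of B
  have hfrB : FiniteDimensional ℂ (LinearMap.range (B : H →ₗ[ℂ] K)) := by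
    have hle : LinearMap.range (B : H →ₗ[ℂ] K) ≤ LinearMap.range (T : H →ₗ[ℂ] K) := by
      rintro _ ⟨x, rfl⟩
      exact ⟨S x, rfl⟩
    exact Submodule.finiteDimensional_of_le hle
  -- operator norm bound
  have hBnorm : ‖B‖ < γ := by
    rcases eq_or_ne B 0 with h | h
    · rw [h, norm_zero]; exact hγ
    · obtain ⟨w, hw0, hww⟩ := norm_attain B hfrB h
      have h1 := hBlt w hw0
      rw [hww] at h1
      exact lt_of_mul_lt_mul_right h1 (norm_nonneg w)
  constructor
  · intro x hx
    rw [hkey]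
    have hcomp : (((γ : ℂ) ^ 2) • (1 : H →L[ℂ] H) - (adjoint B) ∘L B) x
        = ((γ : ℂ) ^ 2) • x - adjoint B (B x) := by
      simp [sub_apply, smul_apply, one_apply, comp_apply]
    rw [hcomp]
    have hinner : (inner ℂ (((γ : ℂ) ^ 2) • x - adjoint B (B x)) x : ℂ).re
        = γ ^ 2 * ‖x‖ ^ 2 - ‖B x‖ ^ 2 := by
      rw [inner_sub_left, inner_smul_left, adjoint_inner_left,
        inner_self_eq_norm_sq_to_K, inner_self_eq_norm_sq_to_K]
      simp [← Complex.ofReal_pow]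
    rw [hinner]
    have h1 : ‖B x‖ ^ 2 < (γ * ‖x‖) ^ 2 := by
      have := hBlt x hx
      have h0 : (0:ℝ) ≤ ‖B x‖ := norm_nonneg _
      nlinarith
    nlinarith
  · rw [hkey]
    set D : H →L[ℂ] H := (adjoint B) ∘L B with hD
    have hc : ((γ : ℂ) ^ 2) ≠ 0 :=
      pow_ne_zero 2 (Complex.ofReal_ne_zero.mpr (ne_of_gt hγ))
    have hfac : ((γ : ℂ) ^ 2) • (1 : H →L[ℂ] H) - D
        = (((γ : ℂ) ^ 2) • (1 : H →L[ℂ] H)) * ((1 : H →L[ℂ] H) - ((γ : ℂ) ^ 2)⁻¹ • D) := by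
      rw [smul_mul_assoc, one_mul, smul_sub, smul_inv_smul₀ hc]
    rw [hfac]
    apply IsUnit.mul
    · have : IsUnit ((γ : ℂ) ^ 2) := isUnit_iff_ne_zero.mpr hc
      have h2 := this.map (algebraMap ℂ (H →L[ℂ] H))
      rwa [Algebra.algebraMap_eq_smul_one] at h2
    · have hnorm : ‖((γ : ℂ) ^ 2)⁻¹ • D‖ < 1 := by
        rw [norm_smul, hD, norm_adjoint_comp_self, norm_inv, norm_pow,
          Complex.norm_real, Real.norm_eq_abs, abs_of_pos hγ]
        rw [inv_mul_lt_iff₀ (by positivity), mul_one]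
        have h0 : (0:ℝ) ≤ ‖B‖ := norm_nonneg _
        nlinarith
      exact (Units.oneSub _ hnorm).isUnit
end

section
/- Let S be an isometry on a Hilbert space H, D a positive operator with closed range such that D° = (S*D²S)^{1/2} is invertible, and suppose P = DSD°^{-2}S*D is the orthogonal projection onto Range D. If Λ = D°^{-2}S*D² satisfies sup_k ‖Λ^k‖ < ∞ and S is strongly stable in the sense that ‖S*^k h‖ → 0 for all h, then any h ∈ H with S*^k h ∈ Range D for all k ≥ 0 must be zero. Consequently the closed linear span of the subspaces S^k(Ker D), k ≥ 0, is all of H. -/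
open ContinuousLinearMap Filter
open scoped InnerProductSpace

theorem stmt9 {H : Type*} [NormedAddCommGroup H] [InnerProductSpace ℂ H] [CompleteSpace H]
    (S : H →L[ℂ] H) (hS : ∀ x, ‖S x‖ = ‖x‖)
    (hstable : ∀ h : H, Tendsto (fun k : ℕ => ‖((adjoint S) ^ k) h‖) atTop (nhds 0))
    (D : H →L[ℂ] H) (hD : D.IsPositive) (hDr : IsClosed (Set.range D))
    (D' : H →L[ℂ] H) (hD' : D'.IsPositive)
    (hD'sq : D' ∘L D' = (adjoint S) ∘L (D ∘L D) ∘L S)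
    (D'i : H →L[ℂ] H) (hi1 : D'i ∘L D' = 1) (hi2 : D' ∘L D'i = 1)
    (hproj1 : IsIdempotentElem (D ∘L S ∘L (D'i ∘L D'i) ∘L (adjoint S) ∘L D))
    (hproj2 : IsSelfAdjoint (D ∘L S ∘L (D'i ∘L D'i) ∘L (adjoint S) ∘L D))
    (hproj3 : LinearMap.range ((D ∘L S ∘L (D'i ∘L D'i) ∘L (adjoint S) ∘L D : H →L[ℂ] H) : H →ₗ[ℂ] H)
        = LinearMap.range (D : H →ₗ[ℂ] H))
    (hΛ : ∃ C : ℝ, ∀ k : ℕ,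
        ‖((D'i ∘L D'i) ∘L ((adjoint S) ∘L (D ∘L D))) ^ k‖ ≤ C) :
    (∀ h : H, (∀ k : ℕ, ((adjoint S) ^ k) h ∈ LinearMap.range (D : H →ₗ[ℂ] H)) → h = 0) ∧
    (⨆ k : ℕ, Submodule.map ((S ^ k : H →L[ℂ] H) : H →ₗ[ℂ] H) (LinearMap.ker (D : H →ₗ[ℂ] H))).topologicalClosure = ⊤ := by
  obtain ⟨C, hC⟩ := hΛ
  set Λ : H →L[ℂ] H := (D'i ∘L D'i) ∘L ((adjoint S) ∘L (D ∘L D)) with hΛdef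
  set P : H →L[ℂ] H := D ∘L S ∘L (D'i ∘L D'i) ∘L (adjoint S) ∘L D with hPdef
  have hDsa : adjoint D = D := isSelfAdjoint_iff'.mp hD.isSelfAdjoint
  have hD'sa : adjoint D' = D' := isSelfAdjoint_iff'.mp hD'.isSelfAdjoint
  -- adjoint of D'i is D'i
  have hD'isa : adjoint D'i = D'i := by
    have h1c : D' ∘L adjoint D'i = 1 := by
      rw [← hD'sa, ← adjoint_comp, hi1, ← star_eq_adjoint, star_one]
    have happ1 : ∀ y : H, D'i (D' y) = y := fun y => by
      have := ContinuousLinearMap.ext_iff.mp hi1 y; simpa using this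
    have happ2 : ∀ x : H, D' (adjoint D'i x) = x := fun x => by
      have := ContinuousLinearMap.ext_iff.mp h1c x; simpa using this
    ext x
    calc adjoint D'i x = D'i (D' (adjoint D'i x)) := (happ1 _).symm
      _ = D'i x := by rw [happ2 x]
  -- P acts as identity on range D
  have hPD : ∀ x : H, P (D x) = D x := by
    intro x
    have : D x ∈ LinearMap.range (P : H →ₗ[ℂ] H) := by rw [hproj3]; exact ⟨x, rfl⟩
    obtain ⟨y, hy⟩ := this
    simp only [ContinuousLinearMap.coe_coe] at hy
    have := congrFun (congrArg (fun T : H →L[ℂ] H => (T : H → H)) hproj1) y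
    simpa [ContinuousLinearMap.mul_apply, hy] using this
  -- D ∘ P = D (adjoint of P ∘ D = D, using selfadjointness)
  have hDP : D ∘L P = D := by
    have hPDc : P ∘L D = D := by ext x; exact hPD x
    have := congrArg adjoint hPDc
    rw [adjoint_comp, hDsa, isSelfAdjoint_iff'.mp hproj2] at this
    exact this
  -- key pointwise identity
  have keyM : ∀ x : H, D (D (S (D'i (D'i ((adjoint S) (D x)))))) = D x := by
    intro x
    have := congrFun (congrArg (fun T : H →L[ℂ] H => (T : H → H)) hDP) x
    simpa [hPdef, comp_apply] using this
  set M : H →L[ℂ] H := adjoint Λ with hMdef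
  have hMform : M = ((D ∘L D) ∘L S) ∘L (D'i ∘L D'i) := by
    rw [hMdef, hΛdef, adjoint_comp, adjoint_comp, adjoint_comp, adjoint_comp,
      adjoint_adjoint, hDsa, hD'isa]
  have hMapp : ∀ x : H, M ((adjoint S) (D x)) = D x := by
    intro x
    rw [hMform]
    simpa [comp_apply] using keyM x
  have hMk : ∀ k : ℕ, ‖M ^ k‖ ≤ C := by
    intro k
    have : M ^ k = adjoint (Λ ^ k) := by
      rw [hMdef, ← star_eq_adjoint, ← star_eq_adjoint, star_pow]
    rw [this, ← star_eq_adjoint, norm_star]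
    exact hC k
  -- Part 1
  have part1 : ∀ h : H, (∀ k : ℕ, ((adjoint S) ^ k) h ∈ LinearMap.range (D : H →ₗ[ℂ] H)) → h = 0 := by
    intro h hmem
    have hind : ∀ k : ℕ, (M ^ k) (((adjoint S) ^ k) h) = h := by
      intro k
      induction k with
      | zero => simp
      | succ n ih =>
        obtain ⟨y, hy⟩ := hmem n
        simp only [ContinuousLinearMap.coe_coe] at hy
        rw [pow_succ M n, pow_succ' (adjoint S) n]
        rw [ContinuousLinearMap.mul_apply, ContinuousLinearMap.mul_apply]
        rw [← hy, hMapp y, hy, ih]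
    have hbound : ∀ k : ℕ, ‖h‖ ≤ C * ‖((adjoint S) ^ k) h‖ := by
      intro k
      calc ‖h‖ = ‖(M ^ k) (((adjoint S) ^ k) h)‖ := by rw [hind k]
        _ ≤ ‖M ^ k‖ * ‖((adjoint S) ^ k) h‖ := le_opNorm _ _
        _ ≤ C * ‖((adjoint S) ^ k) h‖ :=
            mul_le_mul_of_nonneg_right (hMk k) (norm_nonneg _)
    have hlim : Tendsto (fun k : ℕ => C * ‖((adjoint S) ^ k) h‖) atTop (nhds 0) := by
      have := (hstable h).const_mul C
      simpa using this
    have : ‖h‖ ≤ 0 := ge_of_tendsto' hlim hbound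
    exact norm_le_zero_iff.mp this
  refine ⟨part1, ?_⟩
  -- Part 2
  rw [Submodule.topologicalClosure_eq_top_iff]
  rw [Submodule.eq_bot_iff]
  intro h hh
  apply part1 h
  intro k
  -- h ⟂ S^k (ker D) gives (adjoint S)^k h ⟂ ker D
  have horth : ∀ v : H, D v = 0 → ⟪v, ((adjoint S) ^ k) h⟫_ℂ = 0 := by
    intro v hv
    have hmem : (S ^ k) v ∈ ⨆ j : ℕ, Submodule.map ((S ^ j : H →L[ℂ] H) : H →ₗ[ℂ] H) (LinearMap.ker (D : H →ₗ[ℂ] H)) :=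
      Submodule.mem_iSup_of_mem k (Submodule.mem_map_of_mem hv)
    have h0 : ⟪(S ^ k) v, h⟫_ℂ = 0 := hh _ hmem
    have hadj : (adjoint S) ^ k = adjoint (S ^ k) := by
      rw [← star_eq_adjoint, ← star_eq_adjoint, star_pow]
    rw [hadj, adjoint_inner_right]
    exact h0
  -- orthogonal decomposition w.r.t. range D
  set K : Submodule ℂ H := LinearMap.range (D : H →ₗ[ℂ] H) with hKdef
  have hKclosed : IsClosed (K : Set H) := by
    simpa [hKdef, LinearMap.coe_range, ContinuousLinearMap.coe_coe] using hDr
  haveI : CompleteSpace K := hKclosed.completeSpace_coe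
  obtain ⟨u, hu, v, hv, hx⟩ :=
    K.exists_add_mem_mem_orthogonal (((adjoint S) ^ k) h)
  have hvker : D v = 0 := by
    have : ∀ y : H, ⟪y, D v⟫_ℂ = 0 := by
      intro y
      have := hv (D y) ⟨y, rfl⟩
      rwa [← hDsa, adjoint_inner_left] at this
    have := this (D v)
    rwa [inner_self_eq_zero] at this
  have hvx : ⟪v, ((adjoint S) ^ k) h⟫_ℂ = 0 := horth v hvker
  have hvv : ⟪v, v⟫_ℂ = 0 := by
    have huv : ⟪v, u⟫_ℂ = 0 := by
      have := hv u hu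
      rw [← inner_conj_symm, this, map_zero]
    have : ⟪v, u + v⟫_ℂ = 0 := by rw [← hx]; exact hvx
    rwa [inner_add_right, huv, zero_add] at this
  have hv0 : v = 0 := inner_self_eq_zero.mp hvv
  rw [hx, hv0, add_zero]
  exact hu
end

section
/- Let T be a bounded operator on a finite-dimensional Hilbert space X, and suppose there exists a surjective bounded operator W : H → X from some Hilbert space H and a bounded operator Λ on H with uniformly bounded powers converging strongly to zero, such that Λ W* = W* T. Then T is strongly stable and hence the spectral radius of T is strictly less than 1. -/
open ContinuousLinearMap Filter

theorem stmt11 {X H : Type*}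
    [NormedAddCommGroup X] [InnerProductSpace ℂ X] [FiniteDimensional ℂ X]
    [NormedAddCommGroup H] [InnerProductSpace ℂ H] [CompleteSpace H]
    (W : H →L[ℂ] X) (hW : Function.Surjective W)
    (Λ : H →L[ℂ] H) (hΛb : ∃ C : ℝ, ∀ k : ℕ, ‖Λ ^ k‖ ≤ C)
    (hΛs : ∀ h : H, Tendsto (fun k : ℕ => (Λ ^ k) h) atTop (nhds 0))
    (T : X →L[ℂ] X) (hcomm : Λ ∘L (adjoint W) = (adjoint W) ∘L T) :
    (∀ x : X, Tendsto (fun k : ℕ => (T ^ k) x) atTop (nhds 0)) ∧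
    spectralRadius ℂ T < 1 := by
  -- adjoint W kills only zero
  have hker : ∀ x : X, adjoint W x = 0 → x = 0 := by
    intro x hx
    obtain ⟨h, rfl⟩ := hW x
    have h0 : inner ℂ (adjoint W (W h)) h = (0 : ℂ) := by rw [hx]; simp
    rw [ContinuousLinearMap.adjoint_inner_left] at h0
    exact inner_self_eq_zero.mp h0
  have hkerbot : LinearMap.ker ((adjoint W : X →L[ℂ] H) : X →ₗ[ℂ] H) = ⊥ := by
    rw [LinearMap.ker_eq_bot']
    intro x hx
    exact hker x hx
  have hemb := LinearMap.isClosedEmbedding_of_injective hkerbot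
  -- commutation for powers
  have hpow : ∀ k : ℕ, (Λ ^ k) ∘L (adjoint W) = (adjoint W) ∘L (T ^ k) := by
    intro k
    induction k with
    | zero => simp [ContinuousLinearMap.one_def]
    | succ n ih =>
      rw [pow_succ', pow_succ']
      calc (Λ ∘L Λ ^ n) ∘L adjoint W = Λ ∘L ((Λ ^ n) ∘L adjoint W) := by
            rw [ContinuousLinearMap.comp_assoc]
        _ = (Λ ∘L adjoint W) ∘L T ^ n := by rw [ih, ContinuousLinearMap.comp_assoc]
        _ = adjoint W ∘L (T ∘L T ^ n) := by rw [hcomm, ContinuousLinearMap.comp_assoc]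
  -- strong stability of T
  have hstable : ∀ x : X, Tendsto (fun k : ℕ => (T ^ k) x) atTop (nhds 0) := by
    intro x
    have h1 : Tendsto (fun k : ℕ => adjoint W ((T ^ k) x)) atTop (nhds (adjoint W 0)) := by
      have heq : (fun k : ℕ => adjoint W ((T ^ k) x)) =
          fun k : ℕ => (Λ ^ k) (adjoint W x) := by
        funext k
        have := congrArg (fun (A : X →L[ℂ] H) => A x) (hpow k)
        simpa using this.symm
      rw [heq, map_zero]
      exact hΛs (adjoint W x)
    exact (hemb.tendsto_nhds_iff.mpr h1 : _)
  refine ⟨hstable, ?_⟩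
  -- spectral radius
  rcases subsingleton_or_nontrivial X with hX | hX
  · have hs : spectrum ℂ T = ∅ := by
      have : Subsingleton (X →L[ℂ] X) := ⟨fun f g => ContinuousLinearMap.ext fun x =>
        Subsingleton.elim _ _⟩
      ext z
      simp only [Set.mem_empty_iff_false, iff_false]
      intro hz
      exact hz (isUnit_of_subsingleton _)
    simp [spectralRadius, hs]
  · obtain ⟨μ, hμ, hμr⟩ := spectrum.exists_nnnorm_eq_spectralRadius (a := T)
    rw [← hμr]
    have hμspec : μ ∈ spectrum ℂ (T : X →ₗ[ℂ] X) := by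
      have he : (Module.End.toContinuousLinearMap (𝕜 := ℂ) X) (T : X →ₗ[ℂ] X) = T :=
        ContinuousLinearMap.coe_injective rfl
      have := AlgEquiv.spectrum_eq (Module.End.toContinuousLinearMap (𝕜 := ℂ) X)
        (T : X →ₗ[ℂ] X)
      rw [he] at this
      rw [this] at hμ
      exact hμ
    have heig : Module.End.HasEigenvalue (T : X →ₗ[ℂ] X) μ :=
      Module.End.hasEigenvalue_iff_mem_spectrum.mpr hμspec
    obtain ⟨v, hv⟩ := heig.exists_hasEigenvector
    have hTv : T v = μ • v := hv.apply_eq_smul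
    have hvpow : ∀ k : ℕ, (T ^ k) v = μ ^ k • v := by
      intro k
      induction k with
      | zero => simp
      | succ n ih =>
        rw [pow_succ']
        calc (T ∘L T ^ n) v = T ((T ^ n) v) := rfl
          _ = T (μ ^ n • v) := by rw [ih]
          _ = μ ^ n • T v := by rw [map_smul]
          _ = μ ^ (n + 1) • v := by rw [hTv, smul_smul, ← pow_succ]
    have hlt : ‖μ‖ < 1 := by
      by_contra hge
      push_neg at hge
      have hnorm : Tendsto (fun k : ℕ => ‖(T ^ k) v‖) atTop (nhds 0) := by
        simpa using (hstable v).norm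
      have hev : ∀ k : ℕ, ‖(T ^ k) v‖ ≥ ‖v‖ := by
        intro k
        rw [hvpow k, norm_smul, norm_pow]
        calc ‖v‖ = 1 * ‖v‖ := (one_mul _).symm
          _ ≤ ‖μ‖ ^ k * ‖v‖ :=
            mul_le_mul_of_nonneg_right (one_le_pow₀ hge) (norm_nonneg v)
      have hvp : (0 : ℝ) < ‖v‖ := norm_pos_iff.mpr hv.right
      have := ge_of_tendsto hnorm (Eventually.of_forall hev)
      linarith
    exact_mod_cast hlt
end

section
/- Let M₀ be a closed S*-invariant subspace of H²_p (S the forward shift) and define recursively M_k = Ker S* ⊕ S M_{k−1}. Then M_{k−1} ⊆ M_k for every k ≥ 1, the orthogonal projections satisfy I − P_k = S^k(I − P₀)S*^k, and ⋁_{k≥0} M_k = H²_p. -/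
open ContinuousLinearMap Filter

section StmtAux
variable {H : Type*} [NormedAddCommGroup H] [InnerProductSpace ℂ H] [CompleteSpace H]

private lemma stmt13_key_adj (S : H →L[ℂ] H) (hS : ∀ x, ‖S x‖ = ‖x‖) : adjoint S * S = 1 := by
  ext x
  apply ext_inner_right ℂ
  intro y
  rw [ContinuousLinearMap.mul_apply, ContinuousLinearMap.one_apply, adjoint_inner_left]
  calc (inner ℂ (S x) (S y) : ℂ)
      = inner ℂ ((⟨S.toLinearMap, hS⟩ : H →ₗᵢ[ℂ] H) x) ((⟨S.toLinearMap, hS⟩ : H →ₗᵢ[ℂ] H) y) := rfl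
    _ = inner ℂ x y := LinearIsometry.inner_map_map _ x y

private lemma stmt13_proj_fix (P : H →L[ℂ] H) (hP : IsIdempotentElem P) {x : H}
    (hx : x ∈ LinearMap.range (P : H →ₗ[ℂ] H)) : P x = x := by
  obtain ⟨y, rfl⟩ := hx
  conv_rhs => rw [← hP]
  rfl

private lemma stmt13_proj_unique (P Q : H →L[ℂ] H) (hP : IsIdempotentElem P)
    (hQ : IsIdempotentElem Q) (hP' : IsSelfAdjoint P) (hQ' : IsSelfAdjoint Q)
    (h : LinearMap.range (P : H →ₗ[ℂ] H) = LinearMap.range (Q : H →ₗ[ℂ] H)) : P = Q := by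
  have hPa : adjoint P = P := by rw [← star_eq_adjoint]; exact hP'.star_eq
  have hQa : adjoint Q = Q := by rw [← star_eq_adjoint]; exact hQ'.star_eq
  ext x
  have hmem : P x - Q x ∈ LinearMap.range (P : H →ₗ[ℂ] H) :=
    sub_mem (LinearMap.mem_range_self _ x) (h ▸ LinearMap.mem_range_self (Q : H →ₗ[ℂ] H) x)
  have horth : ∀ z ∈ LinearMap.range (P : H →ₗ[ℂ] H), (inner ℂ (P x - Q x) z : ℂ) = 0 := by
    intro z hz
    have hPz : P z = z := stmt13_proj_fix P hP hz
    have hQz : Q z = z := stmt13_proj_fix Q hQ (h ▸ hz)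
    rw [inner_sub_left]
    have e1 : (inner ℂ (P x) z : ℂ) = inner ℂ x z := by
      conv_lhs => rw [← hPa]
      rw [adjoint_inner_left, hPz]
    have e2 : (inner ℂ (Q x) z : ℂ) = inner ℂ x z := by
      conv_lhs => rw [← hQa]
      rw [adjoint_inner_left, hQz]
    rw [e1, e2, sub_self]
  have hz : P x - Q x = 0 := by
    have := horth _ hmem
    rwa [inner_self_eq_zero] at this
  exact sub_eq_zero.mp hz

private lemma stmt13_step (S : H →L[ℂ] H) (hS : ∀ x, ‖S x‖ = ‖x‖)
    (P : H →L[ℂ] H) (hP : IsIdempotentElem P) (hP' : IsSelfAdjoint P) :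
    IsIdempotentElem (1 - S * adjoint S + S * P * adjoint S) ∧
    IsSelfAdjoint (1 - S * adjoint S + S * P * adjoint S) ∧
    LinearMap.range (((1 - S * adjoint S + S * P * adjoint S : H →L[ℂ] H)) : H →ₗ[ℂ] H)
      = LinearMap.ker (adjoint S : H →ₗ[ℂ] H) ⊔ Submodule.map (S : H →ₗ[ℂ] H) (LinearMap.range (P : H →ₗ[ℂ] H)) := by
  have key := stmt13_key_adj S hS
  have cancel : ∀ X : H →L[ℂ] H, X * adjoint S * S = X := fun X => by
    rw [mul_assoc, key, mul_one]
  set T := adjoint S with hT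
  have hPP : P * P = P := hP
  refine ⟨?_, ?_, ?_⟩
  · show _ * _ = _
    simp only [mul_sub, sub_mul, mul_add, add_mul, mul_one, one_mul]
    simp only [← mul_assoc]
    rw [cancel S, cancel (S * P)]
    rw [mul_assoc S P P, hPP]
    abel
  · show star _ = _
    simp only [star_add, star_sub, star_mul, star_one, star_eq_adjoint, adjoint_adjoint, ← hT]
    have hTT : adjoint T = S := by rw [hT, adjoint_adjoint]
    have hPa : adjoint P = P := by rw [← star_eq_adjoint]; exact hP'.star_eq
    rw [hTT, hPa, mul_assoc]
  · apply le_antisymm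
    · rintro y ⟨x, rfl⟩
      have h1 : x - S (T x) ∈ LinearMap.ker (T : H →ₗ[ℂ] H) := by
        simp only [LinearMap.mem_ker, map_sub]
        have : T (S (T x)) = T x := by
          have := congrFun (congrArg DFunLike.coe key) (T x)
          simpa [ContinuousLinearMap.mul_apply] using this
        simp [this]
      have h2 : S (P (T x)) ∈ Submodule.map (S : H →ₗ[ℂ] H) (LinearMap.range (P : H →ₗ[ℂ] H)) :=
        ⟨P (T x), LinearMap.mem_range_self _ _, rfl⟩
      have hexpr : (1 - S * T + S * P * T) x = (x - S (T x)) + S (P (T x)) := by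
        simp [ContinuousLinearMap.mul_apply, sub_apply, add_apply]
      rw [ContinuousLinearMap.coe_coe, hexpr]
      exact Submodule.add_mem_sup h1 h2
    · rw [sup_le_iff]
      constructor
      · intro x hx
        have hx' : T x = 0 := hx
        refine ⟨x, ?_⟩
        simp [sub_apply, add_apply, ContinuousLinearMap.mul_apply, hx']
      · rintro y ⟨m, hm, rfl⟩
        refine ⟨S m, ?_⟩
        have hTS : T (S m) = m := by
          have := congrFun (congrArg DFunLike.coe key) m
          simpa [ContinuousLinearMap.mul_apply] using this
        have hPm : P m = m := stmt13_proj_fix P hP hm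
        simp [sub_apply, add_apply, ContinuousLinearMap.mul_apply, hTS, hPm]

end StmtAux

/-- Abstract model of the Hardy space `H²_p` with its forward shift: `S` is a pure
isometry, i.e. `S*ᵏ → 0` strongly (as holds for the forward shift on `H²_p`). -/
theorem stmt13 {H : Type*} [NormedAddCommGroup H] [InnerProductSpace ℂ H] [CompleteSpace H]
    (S : H →L[ℂ] H) (hS : ∀ x, ‖S x‖ = ‖x‖)
    (hpure : ∀ h : H, Tendsto (fun k : ℕ => ‖((adjoint S) ^ k) h‖) atTop (nhds 0))
    (M : ℕ → Submodule ℂ H) (hMc : ∀ k, IsClosed ((M k : Set H)))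
    (hM0inv : ∀ x ∈ M 0, adjoint S x ∈ M 0)
    (hrec : ∀ k : ℕ, M (k + 1) = LinearMap.ker (adjoint S : H →ₗ[ℂ] H) ⊔ Submodule.map (S : H →ₗ[ℂ] H) (M k))
    (P : ℕ → H →L[ℂ] H)
    (hP1 : ∀ k, IsIdempotentElem (P k)) (hP2 : ∀ k, IsSelfAdjoint (P k))
    (hP3 : ∀ k, LinearMap.range (P k : H →ₗ[ℂ] H) = M k) :
    (∀ k : ℕ, M k ≤ M (k + 1)) ∧
    (∀ k : ℕ, (1 : H →L[ℂ] H) - P k = (S ^ k) ∘L (((1 : H →L[ℂ] H) - P 0) ∘L ((adjoint S) ^ k))) ∧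
    (⨆ k : ℕ, M k).topologicalClosure = ⊤ := by
  have key := stmt13_key_adj S hS
  -- the recursion for the projections
  have hproj : ∀ k, P (k + 1) = 1 - S * adjoint S + S * P k * adjoint S := by
    intro k
    obtain ⟨hidem, hsa, hrange⟩ := stmt13_step S hS (P k) (hP1 k) (hP2 k)
    refine stmt13_proj_unique _ _ (hP1 (k + 1)) hidem (hP2 (k + 1)) hsa ?_
    rw [hP3 (k + 1), hrec k, hrange, hP3 k]
  -- part 2 (in `*` form)
  have part2 : ∀ k, (1 : H →L[ℂ] H) - P k
      = (S ^ k) * (((1 : H →L[ℂ] H) - P 0) * ((adjoint S) ^ k)) := by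
    intro k
    induction k with
    | zero => simp
    | succ k ih =>
      calc (1 : H →L[ℂ] H) - P (k + 1)
          = S * (((1 : H →L[ℂ] H) - P k) * adjoint S) := by rw [hproj k]; noncomm_ring
        _ = S * (((S ^ k) * (((1 : H →L[ℂ] H) - P 0) * ((adjoint S) ^ k))) * adjoint S) := by
            rw [ih]
        _ = (S ^ (k + 1)) * (((1 : H →L[ℂ] H) - P 0) * ((adjoint S) ^ (k + 1))) := by
            rw [pow_succ' S, pow_succ (adjoint S)]; noncomm_ring
  -- part 1
  have part1 : ∀ k : ℕ, M k ≤ M (k + 1) := by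
    intro k
    induction k with
    | zero =>
      intro x hx
      rw [hrec 0]
      have h1 : x - S (adjoint S x) ∈ LinearMap.ker (adjoint S : H →ₗ[ℂ] H) := by
        simp only [LinearMap.mem_ker, map_sub]
        have : adjoint S (S (adjoint S x)) = adjoint S x := by
          have := congrFun (congrArg DFunLike.coe key) (adjoint S x)
          simpa [ContinuousLinearMap.mul_apply] using this
        simp [this]
      have h2 : S (adjoint S x) ∈ Submodule.map (S : H →ₗ[ℂ] H) (M 0) := ⟨_, hM0inv x hx, rfl⟩
      have hx' : x = (x - S (adjoint S x)) + S (adjoint S x) := by abel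
      rw [hx']
      exact Submodule.add_mem_sup h1 h2
    | succ k ih =>
      rw [hrec k, hrec (k + 1)]
      exact sup_le_sup_left (Submodule.map_mono ih) _
  -- isometry powers
  have hSk : ∀ (k : ℕ) (y : H), ‖(S ^ k) y‖ = ‖y‖ := by
    intro k
    induction k with
    | zero => intro y; simp
    | succ k ih =>
      intro y
      rw [pow_succ, ContinuousLinearMap.mul_apply, ih, hS]
  refine ⟨part1, fun k => by rw [← mul_def, ← mul_def]; exact part2 k, ?_⟩
  -- part 3
  rw [eq_top_iff]
  intro x _
  rw [← SetLike.mem_coe, Submodule.topologicalClosure_coe]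
  refine mem_closure_of_tendsto (f := fun k : ℕ => P k x) (b := atTop) ?_ ?_
  · rw [tendsto_iff_norm_sub_tendsto_zero]
    have hnorm : ∀ k : ℕ, ‖P k x - x‖ ≤ ‖(1 : H →L[ℂ] H) - P 0‖ * ‖((adjoint S) ^ k) x‖ := by
      intro k
      have e : P k x - x = -(((1 : H →L[ℂ] H) - P k) x) := by
        simp [sub_apply]
      rw [e, norm_neg, part2 k, ContinuousLinearMap.mul_apply, ContinuousLinearMap.mul_apply, hSk]
      exact ((1 : H →L[ℂ] H) - P 0).le_opNorm _
    refine squeeze_zero (fun k => norm_nonneg _) hnorm ?_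
    simpa using (hpure x).const_mul ‖(1 : H →L[ℂ] H) - P 0‖
  · refine Eventually.of_forall fun k => ?_
    exact SetLike.mem_coe.mpr (le_iSup M k (hP3 k ▸ LinearMap.mem_range_self (P k : H →ₗ[ℂ] H) x))
end

section
/- Let H : H²_p → K²_q be a bounded operator and M a closed subspace of H²_p with S*M ⊆ M and Ker S* ⊆ M. With γ = ‖H∘P_M‖, D_M = (γ²I − P_M H*H P_M)^{1/2}, D°_M = (γ²I − S*P_M H*H P_M S)^{1/2}, R_M the projection onto S*M and Q_M = S R_M: if D°_M is invertible, then P := D_M Q_M D°_M^{-2} Q_M* D_M is the orthogonal projection onto the (closed) range of D_M Q_M. -/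
open ContinuousLinearMap

theorem stmt14 {H K : Type*} [NormedAddCommGroup H] [InnerProductSpace ℂ H] [CompleteSpace H]
    [NormedAddCommGroup K] [InnerProductSpace ℂ K] [CompleteSpace K]
    (S : H →L[ℂ] H) (hS : ∀ x, ‖S x‖ = ‖x‖)
    (Hop : H →L[ℂ] K)
    (M : Submodule ℂ H) (hMc : IsClosed ((M : Set H)))
    (hMinv : ∀ x ∈ M, adjoint S x ∈ M)
    (hker : LinearMap.ker ((adjoint S : H →L[ℂ] H) : H →ₗ[ℂ] H) ≤ M)
    (P : H →L[ℂ] H) (hP1 : IsIdempotentElem P) (hP2 : IsSelfAdjoint P)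
    (hP3 : LinearMap.range (P : H →ₗ[ℂ] H) = M)
    (R : H →L[ℂ] H) (hR1 : IsIdempotentElem R) (hR2 : IsSelfAdjoint R)
    (hR3 : LinearMap.range (R : H →ₗ[ℂ] H) = Submodule.map ((adjoint S : H →L[ℂ] H) : H →ₗ[ℂ] H) M)
    (D : H →L[ℂ] H) (hD : D.IsPositive)
    (hDsq : D ∘L D = ((‖Hop ∘L P‖ : ℂ) ^ 2) • (1 : H →L[ℂ] H)
        - P ∘L ((adjoint Hop) ∘L Hop) ∘L P)
    (D' : H →L[ℂ] H) (hD' : D'.IsPositive)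
    (hD'sq : D' ∘L D' = ((‖Hop ∘L P‖ : ℂ) ^ 2) • (1 : H →L[ℂ] H)
        - (adjoint S) ∘L (P ∘L ((adjoint Hop) ∘L Hop) ∘L P) ∘L S)
    (D'i : H →L[ℂ] H) (hi1 : D'i ∘L D' = 1) (hi2 : D' ∘L D'i = 1) :
    IsIdempotentElem (D ∘L (S ∘L R) ∘L (D'i ∘L D'i) ∘L (adjoint (S ∘L R)) ∘L D) ∧
    IsSelfAdjoint (D ∘L (S ∘L R) ∘L (D'i ∘L D'i) ∘L (adjoint (S ∘L R)) ∘L D) ∧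
    IsClosed (Set.range (D ∘L (S ∘L R))) ∧
    LinearMap.range ((D ∘L (S ∘L R) ∘L (D'i ∘L D'i) ∘L (adjoint (S ∘L R)) ∘L D : H →L[ℂ] H) : H →ₗ[ℂ] H)
      = LinearMap.range ((D ∘L (S ∘L R) : H →L[ℂ] H) : H →ₗ[ℂ] H) := by
  have hSS : star S * S = 1 := by
    have hpres : ∀ x y : H, (inner ℂ (S x) (S y) : ℂ) = inner ℂ x y := fun x y =>
      LinearIsometry.inner_map_map ⟨(S : H →ₗ[ℂ] H), hS⟩ x y
    ext x
    refine ext_inner_right ℂ fun y => ?_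
    simp only [ContinuousLinearMap.mul_apply, one_apply, star_eq_adjoint]
    rw [adjoint_inner_left]
    exact hpres x y
  simp only [← mul_def, ← star_eq_adjoint, star_mul, hR2.star_eq, mul_assoc]
    at hDsq hD'sq hi1 hi2 ⊢
  -- abbreviation for the middle operator
  have hGsa : star ((adjoint Hop).comp Hop) = (adjoint Hop).comp Hop := by
    rw [star_eq_adjoint, adjoint_comp, adjoint_adjoint]
  -- self-adjointness facts
  have hDsa : star D = D := hD.isSelfAdjoint.star_eq
  have hD'sa : star D' = D' := hD'.isSelfAdjoint.star_eq
  have h1' : star D'i * D' = 1 := by rw [← hD'sa, ← star_mul, hi2, star_one]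
  have hD'isa : star D'i = D'i := by
    calc star D'i = star D'i * D' * D'i := by rw [mul_assoc, hi2, mul_one]
      _ = D'i := by rw [h1', one_mul]
  -- key operator identity: S* D² S = D'²
  have op1 : star S * (D * (D * S)) = D' * D' := by
    calc star S * (D * (D * S)) = star S * (D * D * S) := by simp only [mul_assoc]
      _ = D' * D' := by
          rw [hDsq, hD'sq]
          simp only [sub_mul, mul_sub, smul_mul_assoc, mul_smul_comm, one_mul, mul_one,
            mul_assoc]
          rw [hSS]
  have l1 : ∀ z : H →L[ℂ] H, star S * (D * (D * (S * z))) = D' * (D' * z) := by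
    intro z
    calc star S * (D * (D * (S * z))) = star S * (D * (D * S)) * z := by
          simp only [mul_assoc]
      _ = D' * (D' * z) := by rw [op1, mul_assoc]
  -- A := S* P H*H P S satisfies R A = A = A R
  set A : H →L[ℂ] H := star S * (P * ((adjoint Hop).comp Hop * (P * S))) with hA
  have hfix : ∀ y, y ∈ LinearMap.range (R : H →ₗ[ℂ] H) → R y = y := by
    rintro _ ⟨z, rfl⟩; exact DFunLike.congr_fun hR1.eq z
  have hRA : R * A = A := by
    ext x
    have hmem : A x ∈ LinearMap.range (R : H →ₗ[ℂ] H) := by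
      rw [hR3]
      refine ⟨(P * ((adjoint Hop).comp Hop * (P * S))) x, ?_, ?_⟩
      · rw [← hP3]; exact ⟨((adjoint Hop).comp Hop * (P * S)) x, rfl⟩
      · rw [← star_eq_adjoint]; rfl
    exact hfix _ hmem
  have hAsa : star A = A := by
    simp only [hA, star_mul, star_star, hP2.star_eq, hGsa, mul_assoc]
  have hAR : A * R = A := by
    have := congrArg star hRA
    simpa [star_mul, hR2.star_eq, hAsa] using this
  -- R commutes with D'²
  have hcomm : R * (D' * D') = D' * D' * R := by
    rw [hD'sq]
    simp only [mul_sub, sub_mul, mul_smul_comm, smul_mul_assoc, mul_one, one_mul]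
    rw [hRA, hAR]
  have hcommz : ∀ z : H →L[ℂ] H, R * (D' * (D' * z)) = D' * (D' * (R * z)) := by
    intro z
    calc R * (D' * (D' * z)) = R * (D' * D') * z := by simp only [mul_assoc]
      _ = D' * D' * R * z := by rw [hcomm]
      _ = D' * (D' * (R * z)) := by simp only [mul_assoc]
  have hi1' : ∀ z : H →L[ℂ] H, D'i * (D' * z) = z := fun z => by
    rw [← mul_assoc, hi1, one_mul]
  have hEz : ∀ u : H →L[ℂ] H, D'i * (D'i * (D' * (D' * u))) = u := fun u => by
    rw [hi1' (D' * u), hi1' u]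
  have hRR : ∀ z : H →L[ℂ] H, R * (R * z) = R * z := fun z => by
    rw [← mul_assoc, hR1.eq]
  -- idempotence
  have hidem : IsIdempotentElem (D * (S * (R * (D'i * (D'i * (R * (star S * D))))))) := by
    show _ * _ = _
    calc D * (S * (R * (D'i * (D'i * (R * (star S * D)))))) *
          (D * (S * (R * (D'i * (D'i * (R * (star S * D)))))))
        = D * (S * (R * (D'i * (D'i * (R * (star S *
            (D * (D * (S * (R * (D'i * (D'i * (R * (star S * D)))))))))))))) := by
          simp only [mul_assoc]
      _ = D * (S * (R * (D'i * (D'i * (R * (star S * D)))))) := by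
          rw [l1 (R * (D'i * (D'i * (R * (star S * D))))),
            hcommz (R * (D'i * (D'i * (R * (star S * D))))),
            hRR (D'i * (D'i * (R * (star S * D)))),
            hEz (R * (D'i * (D'i * (R * (star S * D))))),
            hRR (D'i * (D'i * (R * (star S * D))))]
  -- the projection fixes D S R
  have hPT : D * (S * (R * (D'i * (D'i * (R * (star S * D)))))) * (D * (S * R))
      = D * (S * R) := by
    calc D * (S * (R * (D'i * (D'i * (R * (star S * D)))))) * (D * (S * R))
        = D * (S * (R * (D'i * (D'i * (R * (star S * (D * (D * (S * R))))))))) := by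
          simp only [mul_assoc]
      _ = D * (S * R) := by
          rw [l1 R, hcommz R, hR1.eq, hEz R, hR1.eq]
  have hDsa' : adjoint D = D := isSelfAdjoint_iff'.mp hD.isSelfAdjoint
  have hD'sa' : adjoint D' = D' := isSelfAdjoint_iff'.mp hD'.isSelfAdjoint
  have hnorm : ∀ y : H, ‖D (S y)‖ = ‖D' y‖ := by
    intro y
    have e1 : (inner ℂ (D (S y)) (D (S y)) : ℂ) = inner ℂ (S y) (D (D (S y))) := by
      have h := adjoint_inner_left D (D (S y)) (S y)
      rw [hDsa'] at h
      exact h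
    have e2 : (inner ℂ (S y) (D (D (S y))) : ℂ) = inner ℂ y ((adjoint S) (D (D (S y)))) :=
      (adjoint_inner_right S y _).symm
    have e3 : (adjoint S) (D (D (S y))) = D' (D' y) := by
      have h := DFunLike.congr_fun op1 y
      simpa [mul_apply, star_eq_adjoint] using h
    have e4 : (inner ℂ y (D' (D' y)) : ℂ) = inner ℂ (D' y) (D' y) := by
      have h := adjoint_inner_left D' (D' y) y
      rw [hD'sa'] at h
      exact h.symm
    have h2 : ‖D (S y)‖ ^ 2 = ‖D' y‖ ^ 2 := by
      rw [← inner_self_eq_norm_sq (𝕜 := ℂ), ← inner_self_eq_norm_sq (𝕜 := ℂ),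
        e1, e2, e3, e4]
    exact (sq_eq_sq₀ (norm_nonneg _) (norm_nonneg _)).mp h2
  refine ⟨hidem, ?_, ?_, ?_⟩
  · show star _ = _
    simp only [star_mul, star_star, hDsa, hD'isa, hR2.star_eq, mul_assoc]
  · -- closed range
    have hNc : IsClosed ((LinearMap.range (R : H →ₗ[ℂ] H) : Submodule ℂ H) : Set H) := by
      have heq : (LinearMap.range (R : H →ₗ[ℂ] H) : Submodule ℂ H) = LinearMap.ker ((1 - R : H →L[ℂ] H) : H →ₗ[ℂ] H) := by
        ext y
        constructor
        · intro hy
          have hy' : R y = y := hfix y hy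
          simp [LinearMap.mem_ker, sub_apply, hy']
        · intro hy
          have h0 : y - R y = 0 := by simpa [LinearMap.mem_ker, sub_apply] using hy
          exact ⟨y, (sub_eq_zero.mp h0).symm⟩
      rw [heq]
      exact ContinuousLinearMap.isClosed_ker _
    haveI : CompleteSpace (LinearMap.range (R : H →ₗ[ℂ] H) : Submodule ℂ H) := hNc.completeSpace_coe
    set f : (LinearMap.range (R : H →ₗ[ℂ] H) : Submodule ℂ H) →L[ℂ] H :=
      (D ∘L S).comp (Submodule.subtypeL _) with hf
    have hbound : ∀ v : (LinearMap.range (R : H →ₗ[ℂ] H) : Submodule ℂ H), ‖v‖ ≤ ‖D'i‖ * ‖f v‖ := by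
      intro v
      have h2 : ‖f v‖ = ‖D' (v : H)‖ := by
        show ‖D (S (v : H))‖ = _
        rw [hnorm]
      have h3 : D'i (D' (v : H)) = (v : H) := by
        have h := DFunLike.congr_fun hi1 (v : H)
        simpa [mul_apply] using h
      calc ‖v‖ = ‖D'i (D' (v : H))‖ := by rw [h3]; rfl
        _ ≤ ‖D'i‖ * ‖D' (v : H)‖ := le_opNorm _ _
        _ = ‖D'i‖ * ‖f v‖ := by rw [h2]
    have hanti : AntilipschitzWith ‖D'i‖₊ f :=
      AddMonoidHomClass.antilipschitz_of_bound f (by simpa using hbound)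
    have hclosed : IsClosed (Set.range f) := hanti.isClosed_range f.uniformContinuous
    have hrange : Set.range ⇑(D * (S * R)) = Set.range ⇑f := by
      ext y
      constructor
      · rintro ⟨x, rfl⟩
        exact ⟨⟨R x, ⟨x, rfl⟩⟩, rfl⟩
      · rintro ⟨⟨v, z, rfl⟩, rfl⟩
        exact ⟨z, rfl⟩
    rw [hrange]
    exact hclosed
  · apply le_antisymm
    · intro y hy
      obtain ⟨x, rfl⟩ := hy
      exact ⟨(D'i * (D'i * (R * (star S * D)))) x, rfl⟩
    · intro y hy
      obtain ⟨x, rfl⟩ := hy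
      exact ⟨(D * (S * R)) x, DFunLike.congr_fun hPT x⟩
end

section
/- With the same notation (S an isometry, M closed with S*M ⊆ M, Ker S* ⊆ M, D°_M invertible, Λ_M = D°_M^{-2}S*D_M²), the compression (I − P_M)Λ_M(I − P_M) equals (I − P_M)S*(I − P_M) and is therefore a contraction; combined with r_spec(Λ_M P_M) ≤ 1, this yields r_spec(Λ_M) ≤ 1. -/
open ContinuousLinearMap

set_option maxHeartbeats 1000000 in
theorem stmt16 {H : Type*} [NormedAddCommGroup H] [InnerProductSpace ℂ H] [CompleteSpace H]
    (S : H →L[ℂ] H) (hS : ∀ x, ‖S x‖ = ‖x‖)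
    (M : Submodule ℂ H) (hMc : IsClosed ((M : Set H)))
    (hMinv : ∀ x ∈ M, adjoint S x ∈ M)
    (hker : LinearMap.ker (adjoint S : H →ₗ[ℂ] H) ≤ M)
    (P : H →L[ℂ] H) (hP1 : IsIdempotentElem P) (hP2 : IsSelfAdjoint P)
    (hP3 : LinearMap.range (P : H →ₗ[ℂ] H) = M)
    (R : H →L[ℂ] H) (hR1 : IsIdempotentElem R) (hR2 : IsSelfAdjoint R)
    (hR3 : LinearMap.range (R : H →ₗ[ℂ] H) = Submodule.map (adjoint S : H →ₗ[ℂ] H) M)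
    (D : H →L[ℂ] H) (hD : D.IsPositive)
    (D' : H →L[ℂ] H) (hD' : D'.IsPositive)
    (hD'sq : D' ∘L D' = (adjoint S) ∘L (D ∘L D) ∘L S)
    (D'i : H →L[ℂ] H) (hi1 : D'i ∘L D' = 1) (hi2 : D' ∘L D'i = 1)
    (hsr : spectralRadius ℂ
        (((D'i ∘L D'i) ∘L ((adjoint S) ∘L (D ∘L D))) ∘L P) ≤ 1)
    (hRΛ : R ∘L ((D'i ∘L D'i) ∘L ((adjoint S) ∘L (D ∘L D)))
      = ((D'i ∘L D'i) ∘L ((adjoint S) ∘L (D ∘L D))) ∘L P) :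
    ((1 : H →L[ℂ] H) - P) ∘L ((D'i ∘L D'i) ∘L ((adjoint S) ∘L (D ∘L D)))
        ∘L ((1 : H →L[ℂ] H) - P)
      = ((1 : H →L[ℂ] H) - P) ∘L (adjoint S) ∘L ((1 : H →L[ℂ] H) - P) ∧
    ‖((1 : H →L[ℂ] H) - P) ∘L ((D'i ∘L D'i) ∘L ((adjoint S) ∘L (D ∘L D)))
        ∘L ((1 : H →L[ℂ] H) - P)‖ ≤ 1 ∧
    spectralRadius ℂ ((D'i ∘L D'i) ∘L ((adjoint S) ∘L (D ∘L D))) ≤ 1 := by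
  set T : H →L[ℂ] H := adjoint S with hTdef
  set L : H →L[ℂ] H := (D'i ∘L D'i) ∘L (T ∘L (D ∘L D)) with hLdef
  set Q : H →L[ℂ] H := 1 - P with hQdef
  -- basic algebraic facts
  have hPP : P * P = P := hP1
  have hQQ : Q * Q = Q := hP1.one_sub
  have hPQ : P * Q = 0 := by rw [hQdef, mul_sub, mul_one, hPP, sub_self]
  have hQP : Q * P = 0 := by rw [hQdef, sub_mul, one_mul, hPP, sub_self]
  have hPfix : ∀ x ∈ M, P x = x := by
    intro x hx
    rw [← hP3] at hx
    obtain ⟨y, rfl⟩ := hx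
    calc P (P y) = (P * P) y := rfl
    _ = P y := by rw [hPP]
  have hPmem : ∀ x, P x ∈ M := fun x => hP3 ▸ LinearMap.mem_range_self _ x
  have hQkill : ∀ x, x ∈ M → Q x = 0 := by
    intro x hx
    have : Q x = x - P x := rfl
    rw [this, hPfix x hx, sub_self]
  have hRmem : ∀ x, R x ∈ M := by
    intro x
    have hx : R x ∈ LinearMap.range (R : H →ₗ[ℂ] H) := LinearMap.mem_range_self (R : H →ₗ[ℂ] H) x
    rw [hR3] at hx
    obtain ⟨m, hm, heq⟩ := hx
    rw [← heq]
    exact hMinv m hm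
  have hPR : P * R = R := by
    ext x
    exact hPfix (R x) (hRmem x)
  have hRL : R * L = L * P := hRΛ
  have hQLP : Q * (L * P) = 0 := by
    rw [← hRL, ← mul_assoc, hQdef, sub_mul, one_mul, hPR, sub_self, zero_mul]
  have hPLP : P * (L * P) = L * P := by
    rw [← hRL, ← mul_assoc, hPR]
  -- isometry facts
  have hTS : T * S = 1 := (norm_map_iff_adjoint_comp_self S).mp hS
  have hLS : L * S = 1 := by
    have hd : T * (D * (D * S)) = D' * D' := by
      have h : D' * D' = T * ((D * D) * S) := hD'sq
      rw [h]
      simp only [mul_assoc]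
    calc L * S = D'i * (D'i * (T * (D * (D * S)))) := by
          rw [hLdef]
          show ((D'i * D'i) * (T * (D * D))) * S = _
          simp only [mul_assoc]
      _ = D'i * (D'i * (D' * D')) := by rw [hd]
      _ = D'i * ((D'i * D') * D') := by simp only [mul_assoc]
      _ = 1 := by rw [show D'i * D' = 1 from hi1, one_mul, show D'i * D' = 1 from hi1]
  -- the compression identity
  have hQL : Q * L = Q * T := by
    have key : ∀ y, T y = 0 → Q (L y) = 0 := by
      intro y hy
      have hyM : y ∈ M := hker (LinearMap.mem_ker.mpr hy)
      have h3 : R (L y) = L (P y) := by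
        have := DFunLike.congr_fun hRL y
        simpa only [mul_apply_eq_comp] using this
      rw [hPfix y hyM] at h3
      have hLyM : L y ∈ M := by
        rw [← h3]
        exact hRmem _
      exact hQkill _ hLyM
    ext x
    simp only [mul_apply_eq_comp]
    have hy : T (x - S (T x)) = 0 := by
      have h := DFunLike.congr_fun hTS (T x)
      simp only [mul_apply_eq_comp, ContinuousLinearMap.one_apply] at h
      rw [map_sub, h, sub_self]
    have h0 : Q (L (x - S (T x))) = 0 := key _ hy
    have h5 : L (S (T x)) = T x := by
      have h := DFunLike.congr_fun hLS (T x)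
      simpa only [mul_apply_eq_comp, ContinuousLinearMap.one_apply] using h
    rw [map_sub, h5, map_sub, sub_eq_zero] at h0
    exact h0
  have hQTP : Q * (T * P) = 0 := by
    ext x
    simp only [mul_apply, zero_apply]
    exact hQkill _ (hMinv _ (hPmem x))
  have hQLQ : Q * L * Q = Q * L := by
    have h : Q * L * Q = Q * L - Q * (L * P) := by rw [hQdef]; noncomm_ring
    rw [h, hQLP, sub_zero]
  have hQTQ : Q * T * Q = Q * T := by
    have h : Q * T * Q = Q * T - Q * (T * P) := by rw [hQdef]; noncomm_ring
    rw [h, hQTP, sub_zero]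
  have part1 : Q * L * Q = Q * T * Q := by rw [hQLQ, hQTQ, hQL]
  -- contraction facts
  have hTcon : ∀ y, ‖T y‖ ≤ ‖y‖ := by
    have hSnorm : ‖S‖ ≤ 1 := opNorm_le_bound S zero_le_one fun x => by rw [hS x, one_mul]
    have hTnorm : ‖T‖ ≤ 1 := by
      rw [hTdef, LinearIsometryEquiv.norm_map adjoint S]
      exact hSnorm
    intro y
    calc ‖T y‖ ≤ ‖T‖ * ‖y‖ := T.le_opNorm y
      _ ≤ 1 * ‖y‖ := by
          apply mul_le_mul_of_nonneg_right hTnorm (norm_nonneg y)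
      _ = ‖y‖ := one_mul _
  have hQcon : ∀ y, ‖Q y‖ ≤ ‖y‖ := by
    have hQsa : IsSelfAdjoint Q := by
      rw [hQdef]
      exact (IsSelfAdjoint.one (R := H →L[ℂ] H)).sub hP2
    have hQadj : adjoint Q = Q := by
      rw [← ContinuousLinearMap.star_eq_adjoint]
      exact hQsa.star_eq
    intro y
    have h1 : @inner ℂ _ _ (Q y) (Q y) = @inner ℂ _ _ (Q y) y := by
      have h2 := ContinuousLinearMap.adjoint_inner_left Q y (Q y)
      rw [hQadj] at h2
      have h3 : Q (Q y) = Q y := by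
        have := DFunLike.congr_fun hQQ y
        simpa only [mul_apply_eq_comp] using this
      rw [h3] at h2
      exact h2.symm
    have h4 : ‖Q y‖ ^ 2 = RCLike.re (@inner ℂ _ _ (Q y) (Q y)) := by
      rw [@inner_self_eq_norm_sq ℂ]
    have h5 : ‖Q y‖ ^ 2 ≤ ‖Q y‖ * ‖y‖ := by
      rw [h4, h1]
      calc RCLike.re (@inner ℂ _ _ (Q y) y) ≤ ‖(@inner ℂ _ _ (Q y) y : ℂ)‖ :=
            RCLike.re_le_norm _
        _ ≤ ‖Q y‖ * ‖y‖ := norm_inner_le_norm _ _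
    nlinarith [norm_nonneg (Q y), norm_nonneg y]
  -- first goal
  have g1 : Q ∘L L ∘L Q = Q ∘L T ∘L Q := by
    show Q * (L * Q) = Q * (T * Q)
    rw [← mul_assoc, ← mul_assoc, part1]
  refine ⟨g1, ?_, ?_⟩
  · -- norm bound
    rw [g1]
    refine opNorm_le_bound _ zero_le_one fun x => ?_
    simp only [comp_apply]
    rw [one_mul]
    calc ‖Q (T (Q x))‖ ≤ ‖T (Q x)‖ := hQcon _
      _ ≤ ‖Q x‖ := hTcon _
      _ ≤ ‖x‖ := hQcon _
  · -- spectral radius bound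
    show (⨆ k ∈ spectrum ℂ L, (‖k‖₊ : ENNReal)) ≤ 1
    refine iSup₂_le fun z hz => ?_
    by_contra hcon
    push_neg at hcon
    have hz1 : (1 : NNReal) < ‖z‖₊ := by exact_mod_cast hcon
    have hz1' : (1 : ℝ) < ‖z‖ := hz1
    have hzne : z ≠ 0 := by
      intro h
      rw [h] at hz1'
      simp at hz1'
      linarith
    -- setup
    set a : H →L[ℂ] H := L * P with hadef
    set b : H →L[ℂ] H := P * (L * Q) with hbdef
    set c : H →L[ℂ] H := Q * L * Q with hcdef
    set w : H →L[ℂ] H := algebraMap ℂ (H →L[ℂ] H) z with hwdef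
    set v : H →L[ℂ] H := algebraMap ℂ (H →L[ℂ] H) z⁻¹ with hvdef
    have hvw : v * w = 1 := by
      rw [hvdef, hwdef, ← map_mul, inv_mul_cancel₀ hzne, map_one]
    have hwv : w * v = 1 := by
      rw [hvdef, hwdef, ← map_mul, mul_inv_cancel₀ hzne, map_one]
    have hcw : ∀ x : H →L[ℂ] H, w * x = x * w := fun x => Algebra.commutes z x
    have hcv : ∀ x : H →L[ℂ] H, v * x = x * v := fun x => Algebra.commutes z⁻¹ x
    -- relations among a b c
    have aP : a * P = a := by rw [hadef, mul_assoc, hPP]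
    have Pa : P * a = a := hPLP
    have aQ : a * Q = 0 := by rw [hadef, mul_assoc, hPQ, mul_zero]
    have Qa : Q * a = 0 := hQLP
    have Pb : P * b = b := by rw [hbdef, ← mul_assoc, hPP]
    have bP : b * P = 0 := by rw [hbdef, mul_assoc, mul_assoc, hQP, mul_zero, mul_zero]
    have Qb : Q * b = 0 := by rw [hbdef, ← mul_assoc, hQP, zero_mul]
    have Qc : Q * c = c := by rw [hcdef, ← mul_assoc, ← mul_assoc, hQQ]
    have cQ : c * Q = c := by rw [hcdef, mul_assoc, hQQ]
    have Pc : P * c = 0 := by rw [hcdef, ← mul_assoc, ← mul_assoc, hPQ, zero_mul, zero_mul]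
    have cP : c * P = 0 := by rw [hcdef, mul_assoc, hQP, mul_zero]
    have ba : b * a = 0 := by
      rw [hbdef, hadef, mul_assoc, mul_assoc, hQLP, mul_zero, mul_zero]
    have bb : b * b = 0 := by
      rw [hbdef, mul_assoc P (L * Q), mul_assoc L Q, ← mul_assoc Q P, hQP, zero_mul,
        mul_zero, mul_zero]
    have hsum : a + b + c = L := by
      rw [hadef, hbdef, hcdef, hQdef]
      noncomm_ring
    -- the two invertible operators
    have hz1e : (1 : ENNReal) < (‖z‖₊ : ENNReal) := by exact_mod_cast hz1
    have hA : IsUnit (w - a) := by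
      have hsr' : spectralRadius ℂ (L * P) ≤ 1 := hsr
      have hlt : spectralRadius ℂ (L * P) < ‖z‖₊ := lt_of_le_of_lt hsr' hz1e
      have := spectrum.mem_resolventSet_of_spectralRadius_lt hlt
      rw [spectrum.mem_resolventSet_iff] at this
      exact this
    have hcn : ‖c‖ ≤ 1 := by
      rw [part1]
      refine opNorm_le_bound _ zero_le_one fun x => ?_
      simp only [mul_apply_eq_comp]
      rw [one_mul]
      calc ‖Q (T (Q x))‖ ≤ ‖T (Q x)‖ := hQcon _
        _ ≤ ‖Q x‖ := hTcon _
        _ ≤ ‖x‖ := hQcon _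
    have hC : IsUnit (w - c) := by
      have hvc : ‖v * c‖ < 1 := by
        have hvceq : v * c = z⁻¹ • c := by rw [hvdef, Algebra.smul_def]
        rw [hvceq, norm_smul, norm_inv]
        have h0 : (0:ℝ) < ‖z‖⁻¹ := by positivity
        have h1 : ‖z‖⁻¹ * ‖c‖ ≤ ‖z‖⁻¹ * 1 := mul_le_mul_of_nonneg_left hcn h0.le
        have h2 : ‖z‖⁻¹ * 1 < 1 := by
          rw [mul_one, inv_lt_one_iff₀]
          right; exact hz1'
        linarith
      have h1 : IsUnit ((1 : H →L[ℂ] H) - v * c) := isUnit_one_sub_of_norm_lt_one hvc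
      have h2 : w - c = w * (1 - v * c) := by
        rw [mul_sub, mul_one, ← mul_assoc, hwv, one_mul]
      rw [h2]
      exact (hzne.isUnit.map (algebraMap ℂ (H →L[ℂ] H))).mul h1
    obtain ⟨uA, huA⟩ := hA
    obtain ⟨uC, huC⟩ := hC
    set G : H →L[ℂ] H := ↑uA⁻¹ with hGdef
    set F : H →L[ℂ] H := ↑uC⁻¹ with hFdef
    have G1 : (w - a) * G = 1 := by rw [← huA, hGdef]; exact uA.mul_inv
    have G2 : G * (w - a) = 1 := by rw [← huA, hGdef]; exact uA.inv_mul
    have F1 : (w - c) * F = 1 := by rw [← huC, hFdef]; exact uC.mul_inv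
    have F2 : F * (w - c) = 1 := by rw [← huC, hFdef]; exact uC.inv_mul
    -- commutation relations with G and F
    have QG : Q * G = v * Q := by
      have h1 : Q * (w - a) = w * Q := by
        rw [mul_sub, Qa, sub_zero, ← hcw]
      have h2 : Q = w * (Q * G) := by
        calc Q = Q * ((w - a) * G) := by rw [G1, mul_one]
          _ = (Q * (w - a)) * G := by rw [mul_assoc]
          _ = (w * Q) * G := by rw [h1]
          _ = w * (Q * G) := by rw [mul_assoc]
      calc Q * G = (v * w) * (Q * G) := by rw [hvw, one_mul]
        _ = v * (w * (Q * G)) := by rw [mul_assoc]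
        _ = v * Q := by rw [← h2]
    have GQ : G * Q = v * Q := by
      have h1 : (w - a) * Q = w * Q := by
        rw [sub_mul, aQ, sub_zero]
      have h2 : Q = w * (G * Q) := by
        calc Q = (G * (w - a)) * Q := by rw [G2, one_mul]
          _ = G * ((w - a) * Q) := by rw [mul_assoc]
          _ = G * (w * Q) := by rw [h1]
          _ = (G * w) * Q := by rw [mul_assoc]
          _ = (w * G) * Q := by rw [← hcw]
          _ = w * (G * Q) := by rw [mul_assoc]
      calc G * Q = (v * w) * (G * Q) := by rw [hvw, one_mul]
        _ = v * (w * (G * Q)) := by rw [mul_assoc]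
        _ = v * Q := by rw [← h2]
    have PF : P * F = v * P := by
      have h1 : P * (w - c) = w * P := by
        rw [mul_sub, Pc, sub_zero, ← hcw]
      have h2 : P = w * (P * F) := by
        calc P = P * ((w - c) * F) := by rw [F1, mul_one]
          _ = (P * (w - c)) * F := by rw [mul_assoc]
          _ = (w * P) * F := by rw [h1]
          _ = w * (P * F) := by rw [mul_assoc]
      calc P * F = (v * w) * (P * F) := by rw [hvw, one_mul]
        _ = v * (w * (P * F)) := by rw [mul_assoc]
        _ = v * P := by rw [← h2]
    have FP : F * P = v * P := by
      have h1 : (w - c) * P = w * P := by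
        rw [sub_mul, cP, sub_zero]
      have h2 : P = w * (F * P) := by
        calc P = (F * (w - c)) * P := by rw [F2, one_mul]
          _ = F * ((w - c) * P) := by rw [mul_assoc]
          _ = F * (w * P) := by rw [h1]
          _ = (F * w) * P := by rw [mul_assoc]
          _ = (w * F) * P := by rw [← hcw]
          _ = w * (F * P) := by rw [mul_assoc]
      calc F * P = (v * w) * (F * P) := by rw [hvw, one_mul]
        _ = v * (w * (F * P)) := by rw [mul_assoc]
        _ = v * P := by rw [← h2]
    -- derived commutation relations
    have aF : a * F = v * a := by
      calc a * F = (a * P) * F := by rw [aP]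
        _ = a * (P * F) := by rw [mul_assoc]
        _ = a * (v * P) := by rw [PF]
        _ = (a * v) * P := by rw [← mul_assoc]
        _ = (v * a) * P := by rw [← hcv]
        _ = v * (a * P) := by rw [mul_assoc]
        _ = v * a := by rw [aP]
    have Fa : F * a = v * a := by
      calc F * a = F * (P * a) := by rw [Pa]
        _ = (F * P) * a := by rw [mul_assoc]
        _ = (v * P) * a := by rw [FP]
        _ = v * (P * a) := by rw [mul_assoc]
        _ = v * a := by rw [Pa]
    have cG : c * G = v * c := by
      calc c * G = (c * Q) * G := by rw [cQ]
        _ = c * (Q * G) := by rw [mul_assoc]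
        _ = c * (v * Q) := by rw [QG]
        _ = (c * v) * Q := by rw [← mul_assoc]
        _ = (v * c) * Q := by rw [← hcv]
        _ = v * (c * Q) := by rw [mul_assoc]
        _ = v * c := by rw [cQ]
    have Gc : G * c = v * c := by
      calc G * c = G * (Q * c) := by rw [Qc]
        _ = (G * Q) * c := by rw [mul_assoc]
        _ = (v * Q) * c := by rw [GQ]
        _ = v * (Q * c) := by rw [mul_assoc]
        _ = v * c := by rw [Qc]
    have Fb : F * b = v * b := by
      calc F * b = F * (P * b) := by rw [Pb]
        _ = (F * P) * b := by rw [mul_assoc]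
        _ = (v * P) * b := by rw [FP]
        _ = v * (P * b) := by rw [mul_assoc]
        _ = v * b := by rw [Pb]
    -- the two equations for the diagonal part
    have e5 : (w - a - c) * v = 1 - v * a - v * c := by
      rw [sub_mul, sub_mul, hwv, ← hcv a, ← hcv c]
    have e5' : v * (w - a - c) = 1 - v * a - v * c := by
      rw [mul_sub, mul_sub, hvw]
    have EqI : (w - a - c) * (G + F - v) = 1 := by
      have step : (w - a - c) * (G + F - v)
          = (w - a) * G - c * G + ((w - c) * F - a * F) - (w - a - c) * v := by
        noncomm_ring
      rw [step, G1, F1, cG, aF, e5]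
      abel
    have EqII : (G + F - v) * (w - a - c) = 1 := by
      have step : (G + F - v) * (w - a - c)
          = G * (w - a) - G * c + (F * (w - c) - F * a) - v * (w - a - c) := by
        noncomm_ring
      rw [step, G2, F2, Gc, Fa, e5']
      abel
    have unit_ac : IsUnit (w - a - c) := ⟨⟨w - a - c, G + F - v, EqI, EqII⟩, rfl⟩
    -- the nilpotent part
    set N : H →L[ℂ] H := b * F with hNdef
    have hN2 : N * N = 0 := by
      calc N * N = b * ((F * b) * F) := by rw [hNdef]; noncomm_ring
        _ = b * ((v * b) * F) := by rw [Fb]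
        _ = (b * v) * (b * F) := by noncomm_ring
        _ = (v * b) * (b * F) := by rw [← hcv]
        _ = v * ((b * b) * F) := by noncomm_ring
        _ = 0 := by rw [bb, zero_mul, mul_zero]
    have unit_N : IsUnit ((1 : H →L[ℂ] H) - N) := by
      refine ⟨⟨1 - N, 1 + N, ?_, ?_⟩, rfl⟩
      · have step : ((1 : H →L[ℂ] H) - N) * (1 + N) = 1 - N * N := by noncomm_ring
        rw [step, hN2, sub_zero]
      · have step : ((1 : H →L[ℂ] H) + N) * (1 - N) = 1 - N * N := by noncomm_ring
        rw [step, hN2, sub_zero]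
    -- the factorization
    have h6 : N * (w - a - c) = b := by
      calc N * (w - a - c) = b * (F * (w - c)) - b * (F * a) := by rw [hNdef]; noncomm_ring
        _ = b * 1 - b * (v * a) := by rw [F2, Fa]
        _ = b - (b * v) * a := by rw [mul_one, ← mul_assoc]
        _ = b - (v * b) * a := by rw [← hcv]
        _ = b - v * (b * a) := by rw [mul_assoc]
        _ = b := by rw [ba, mul_zero, sub_zero]
    have hfact : w - L = ((1 : H →L[ℂ] H) - N) * (w - a - c) := by
      have step : ((1 : H →L[ℂ] H) - N) * (w - a - c)
          = (w - a - c) - N * (w - a - c) := by noncomm_ring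
      rw [step, h6, ← hsum]
      noncomm_ring
    have final : IsUnit (w - L) := by
      rw [hfact]
      exact unit_N.mul unit_ac
    exact spectrum.mem_iff.mp hz final
end
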